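/- Let G be a finite tree with summed branch degree d, let b be a branch vertex of G, and let S = v_1,…,v_s be a segment of G with v_1 = b. For any i ∈ [s], the graph G'_i obtained from G by deleting the edge v_i v_{i+1} when i < s and contracting v_1,…,v_i into the single vertex b has summed branch degree at most d − 1. -/

import Mathlib

attribute [local instance] Classical.propDecidable

/-- Candidate `c`'s vote count in district `D`, for weight vectors `w`. -/
def votesW {V C : Type*} (w : V → C → ℕ) (c : C) (D : Finset V) : ℕ := ∑ x ∈ D, w x c

/-- Candidate `c` *leads* district `D`: `c`'s vote count is at least that of every
candidate. -/
def leadsW {V C : Type*} (w : V → C → ℕ) (c : C) (D : Finset V) : Prop :=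
  ∀ c' : C, votesW w c' D ≤ votesW w c D

/-- Candidate `c` *wins* district `D`: `c`'s vote count strictly exceeds that of every other
candidate. -/
def winsW {V C : Type*} (w : V → C → ℕ) (c : C) (D : Finset V) : Prop :=
  ∀ c' : C, c' ≠ c → votesW w c' D < votesW w c D

/-- A district-partition of `G` into `k` districts: `k` pairwise-disjoint nonempty vertex sets
covering all vertices, each inducing a connected subgraph. -/
def IsDistrictPartition {V : Type*} (G : SimpleGraph V) (k : ℕ) (P : Finset (Finset V)) : Prop :=
  P.card = k ∧ (∀ D ∈ P, D.Nonempty) ∧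
    (∀ D ∈ P, ∀ D' ∈ P, D ≠ D' → Disjoint D D') ∧
    (∀ x : V, ∃ D ∈ P, x ∈ D) ∧
    (∀ D ∈ P, (G.induce (D : Set V)).Connected)

/-- A district-partition is *satisfying* for the preferred candidate `p` if `p` wins strictly
more districts than any other candidate leads. -/
def SatisfyingW {V C : Type*} (w : V → C → ℕ) (p : C) (P : Finset (Finset V)) : Prop :=
  ∀ q : C, q ≠ p →
    (P.filter fun D => leadsW w q D).card < (P.filter fun D => winsW w p D).card

/-- Vertex set obtained from `V` by contracting the prefix `v_0, …, v_i` of the segment `v`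
into its first vertex `b = v_0`: we keep `b` and delete the other contracted vertices. -/
abbrev ContractedVerts {V : Type*} (b : V) {s : ℕ} (v : Fin s → V) (i : Fin s) : Type _ :=
  {x : V // x = b ∨ ∀ j : Fin s, j ≤ i → x ≠ v j}

/-- The graph `G'_i` obtained from `G` by deleting the edge `v_i v_{i+1}` (when `v_{i+1}`
exists) and contracting the prefix `v_0, …, v_i` of the segment into the single vertex `b`:
two surviving vertices other than `b` are adjacent iff they were adjacent in `G`, and `b` is
adjacent to a surviving vertex `y` iff some contracted vertex `v_j` (with `j ≤ i`) is adjacent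
to `y` in `G`, except via the deleted edge `v_i v_{i+1}`. -/
def contractGraph {V : Type*} (G : SimpleGraph V) (b : V) {s : ℕ} (v : Fin s → V) (i : Fin s) :
    SimpleGraph (ContractedVerts b v i) :=
  SimpleGraph.fromRel (fun x y =>
    ((x : V) ≠ b ∧ (y : V) ≠ b ∧ G.Adj (x : V) (y : V)) ∨
    ((x : V) = b ∧ ∃ j : Fin s, j ≤ i ∧ G.Adj (v j) (y : V) ∧
      ¬(j = i ∧ ∃ h : (i : ℕ) + 1 < s, (y : V) = v ⟨(i : ℕ) + 1, h⟩)))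

/-- The weight function of the contracted instance: the contracted vertex `b` carries the sum
of the weight vectors of `v_0, …, v_i`, and every other vertex keeps its weight vector. -/
noncomputable def contractWeight {V C : Type*} (w : V → C → ℕ) (b : V) {s : ℕ} (v : Fin s → V) (i : Fin s) :
    ContractedVerts b v i → C → ℕ :=
  fun x c =>
    if (x : V) = b then ∑ j ∈ Finset.univ.filter (fun j : Fin s => j ≤ i), w (v j) c
    else w (x : V) c

/-- The *summed branch degree* of a graph: the sum of `deg(x)` over all branch vertices `x`
(vertices of degree at least 3). -/
noncomputable def sumBranchDeg {V : Type*} [Fintype V] (G : SimpleGraph V) : ℕ :=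
  letI : DecidableRel G.Adj := fun _ _ => Classical.propDecidable _
  ∑ x ∈ Finset.univ.filter (fun x => 3 ≤ G.degree x), G.degree x

lemma sumBranchDeg_spec {V : Type*} [Fintype V] (G : SimpleGraph V)
    [inst : DecidableRel G.Adj] :
    sumBranchDeg G = ∑ x ∈ Finset.univ.filter (fun x => 3 ≤ G.degree x), G.degree x := by
  unfold sumBranchDeg
  congr!

/-- measure decrease in Theorem 3.  Let `G` be a finite tree with summed
branch degree `d`, `b` a branch vertex of `G`, and `S = v_1, …, v_s` a segment of `G` with
`v_1 = b`.  For any `i ∈ [s]`, the graph `G'_i` obtained from `G` by deleting the edge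
`v_i v_{i+1}` (when `i < s`) and contracting `v_1, …, v_i` into the single vertex `b` has
summed branch degree at most `d - 1`. -/
theorem contraction_decreases_summed_branch_degree {V : Type*} [Fintype V] [DecidableEq V]
    (G : SimpleGraph V) [DecidableRel G.Adj] (hG : G.IsTree)
    (b : V) (hb : 3 ≤ G.degree b)
    (s : ℕ) (hs : 2 ≤ s) (v : Fin s → V)
    (hv1 : v ⟨0, by omega⟩ = b)
    (hinj : Function.Injective v)
    (hpath : ∀ (j : ℕ) (h : j + 1 < s), G.Adj (v ⟨j, by omega⟩) (v ⟨j + 1, h⟩))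
    (hend : G.degree (v ⟨s - 1, by omega⟩) = 1 ∨ 3 ≤ G.degree (v ⟨s - 1, by omega⟩))
    (hinternal : ∀ (j : ℕ) (h : j < s), 0 < j → j < s - 1 → G.degree (v ⟨j, h⟩) = 2)
    (i : Fin s) :
    sumBranchDeg (contractGraph G b v i) ≤ sumBranchDeg G - 1 := by
  classical
  set Gc := contractGraph G b v i with hGcdef
  letI instc : DecidableRel Gc.Adj := fun _ _ => Classical.propDecidable _
  have hs1 : s - 1 < s := by omega
  have h0 : (0:ℕ) < s := by omega
  have h1 : (1:ℕ) < s := by omega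
  set w1 : V := v ⟨1, h1⟩ with hw1def
  set wlast : V := v ⟨s-1, hs1⟩ with hwlastdef
  set wpre : V := v ⟨s-2, by omega⟩ with hwpredef
  set bc : ContractedVerts b v i := ⟨b, Or.inl rfl⟩ with hbcdef
  have hbcoe : (bc : V) = b := rfl
  -- basic facts
  have hlive : ∀ x : ContractedVerts b v i, (x:V) ≠ b → ∀ j : Fin s, j ≤ i → (x:V) ≠ v j :=
    fun x hx => x.2.resolve_left hx
  have hcoe_ne : ∀ x : ContractedVerts b v i, x ≠ bc → (x:V) ≠ b := by
    intro x hx hxb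
    exact hx (Subtype.ext hxb)
  have hAdj : ∀ x y : ContractedVerts b v i, Gc.Adj x y ↔ x ≠ y ∧
      ((((x : V) ≠ b ∧ (y : V) ≠ b ∧ G.Adj (x : V) (y : V)) ∨
        ((x : V) = b ∧ ∃ j : Fin s, j ≤ i ∧ G.Adj (v j) (y : V) ∧
          ¬(j = i ∧ ∃ h : (i : ℕ) + 1 < s, (y : V) = v ⟨(i : ℕ) + 1, h⟩))) ∨
       (((y : V) ≠ b ∧ (x : V) ≠ b ∧ G.Adj (y : V) (x : V)) ∨
        ((y : V) = b ∧ ∃ j : Fin s, j ≤ i ∧ G.Adj (v j) (x : V) ∧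
          ¬(j = i ∧ ∃ h : (i : ℕ) + 1 < s, (x : V) = v ⟨(i : ℕ) + 1, h⟩)))) := by
    intro x y
    exact SimpleGraph.fromRel_adj _ x y
  have hv1adj : G.Adj b w1 := by
    have := hpath 0 h1
    rwa [hv1] at this
  have hpreadj : G.Adj wpre wlast := by
    have h2 : s - 2 + 1 < s := by omega
    have := hpath (s-2) h2
    have he : (⟨s-2+1, h2⟩ : Fin s) = ⟨s-1, hs1⟩ := by
      apply Fin.ext; simp; omega
    rwa [he] at this
  -- internal vertices have exactly their path neighbors
  have hinternalNbr : ∀ (j : Fin s) (hj0 : 0 < (j:ℕ)) (hjs : (j:ℕ) < s-1) (z : V),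
      G.Adj (v j) z → z = v ⟨(j:ℕ)-1, by omega⟩ ∨ z = v ⟨(j:ℕ)+1, by omega⟩ := by
    intro j hj0 hjs z hzadj
    have hjm : (j:ℕ) - 1 + 1 < s := by omega
    have hadj1 : G.Adj (v j) (v ⟨(j:ℕ)-1, by omega⟩) := by
      have := hpath ((j:ℕ)-1) hjm
      have he : (⟨(j:ℕ)-1+1, hjm⟩ : Fin s) = j := by apply Fin.ext; simp; omega
      rw [he] at this
      exact this.symm
    have hadj2 : G.Adj (v j) (v ⟨(j:ℕ)+1, by omega⟩) := by
      have := hpath (j:ℕ) (by omega)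
      have he : (⟨(j:ℕ), by omega⟩ : Fin s) = j := by apply Fin.ext; rfl
      rwa [he] at this
    have hne : v ⟨(j:ℕ)-1, by omega⟩ ≠ v ⟨(j:ℕ)+1, by omega⟩ := by
      intro h
      have := hinj h
      simp only [Fin.mk.injEq] at this
      omega
    have hdeg : G.degree (v j) = 2 := by
      have := hinternal (j:ℕ) j.isLt hj0 hjs
      simpa using this
    have hsub : ({v ⟨(j:ℕ)-1, by omega⟩, v ⟨(j:ℕ)+1, by omega⟩} : Finset V) ⊆ G.neighborFinset (v j) := by
      intro t ht
      simp only [Finset.mem_insert, Finset.mem_singleton] at ht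
      rcases ht with rfl | rfl
      · exact (SimpleGraph.mem_neighborFinset _ _ _).2 hadj1
      · exact (SimpleGraph.mem_neighborFinset _ _ _).2 hadj2
    have hcard : (G.neighborFinset (v j)).card ≤ 2 := by
      rw [SimpleGraph.card_neighborFinset_eq_degree, hdeg]
    have heq : ({v ⟨(j:ℕ)-1, by omega⟩, v ⟨(j:ℕ)+1, by omega⟩} : Finset V) = G.neighborFinset (v j) := by
      apply Finset.eq_of_subset_of_card_le hsub
      rwa [Finset.card_pair hne]
    have hz : z ∈ G.neighborFinset (v j) := (SimpleGraph.mem_neighborFinset _ _ _).2 hzadj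
    rw [← heq] at hz
    simpa using hz
  -- Step A: degrees of surviving vertices do not increase
  have hkey : ∀ x z : ContractedVerts b v i, (x:V) ≠ b → Gc.Adj x z →
      ((z:V) ≠ b ∧ G.Adj (x:V) (z:V)) ∨ ((z:V) = b ∧ ∃ j : Fin s, j ≤ i ∧ G.Adj (v j) (x:V)) := by
    intro x z hxb h
    rcases (hAdj x z).1 h with ⟨hne, h1 | h1⟩
    · rcases h1 with ⟨_, hzb, ha⟩ | ⟨hxb', _⟩
      · exact Or.inl ⟨hzb, ha⟩
      · exact absurd hxb' hxb
    · rcases h1 with ⟨hzb, _, ha⟩ | ⟨hzb, j, hj, ha, _⟩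
      · exact Or.inl ⟨hzb, ha.symm⟩
      · exact Or.inr ⟨hzb, j, hj, ha⟩
  have hdegle : ∀ x : ContractedVerts b v i, (x:V) ≠ b → Gc.degree x ≤ G.degree (x:V) := by
    intro x hxb
    rw [← SimpleGraph.card_neighborFinset_eq_degree, ← SimpleGraph.card_neighborFinset_eq_degree]
    classical
    set f : ContractedVerts b v i → V := fun z =>
      if (z:V) = b then
        (if hw : ∃ j : Fin s, j ≤ i ∧ G.Adj (v j) (x:V) then v hw.choose else b)
      else (z:V) with hfdef
    apply Finset.card_le_card_of_injOn f
    · intro z hz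
      rw [Finset.mem_coe, SimpleGraph.mem_neighborFinset] at hz
      rcases hkey x z hxb hz with ⟨hzb, ha⟩ | ⟨hzb, j, hj, ha⟩
      · simp only [hfdef, if_neg hzb]
        exact (SimpleGraph.mem_neighborFinset _ _ _).2 ha
      · have hw : ∃ j : Fin s, j ≤ i ∧ G.Adj (v j) (x:V) := ⟨j, hj, ha⟩
        simp only [hfdef, if_pos hzb, dif_pos hw]
        exact (SimpleGraph.mem_neighborFinset _ _ _).2 hw.choose_spec.2.symm
    · intro z1 hz1 z2 hz2 hf
      rw [Finset.mem_coe, SimpleGraph.mem_neighborFinset] at hz1 hz2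
      by_cases h1 : (z1:V) = b <;> by_cases h2 : (z2:V) = b
      · exact Subtype.ext (h1.trans h2.symm)
      · exfalso
        rcases hkey x z1 hxb hz1 with ⟨hzb, _⟩ | ⟨_, j, hj, ha⟩
        · exact hzb h1
        have hw : ∃ j : Fin s, j ≤ i ∧ G.Adj (v j) (x:V) := ⟨j, hj, ha⟩
        simp only [hfdef, if_pos h1, if_neg h2, dif_pos hw] at hf
        exact hlive z2 h2 hw.choose hw.choose_spec.1 hf.symm
      · exfalso
        rcases hkey x z2 hxb hz2 with ⟨hzb, _⟩ | ⟨_, j, hj, ha⟩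
        · exact hzb h2
        have hw : ∃ j : Fin s, j ≤ i ∧ G.Adj (v j) (x:V) := ⟨j, hj, ha⟩
        simp only [hfdef, if_pos h2, if_neg h1, dif_pos hw] at hf
        exact hlive z1 h1 hw.choose hw.choose_spec.1 hf
      · simp only [hfdef, if_neg h1, if_neg h2] at hf
        exact Subtype.ext hf
  -- Step B: neighbors of bc
  have hkeyb : ∀ z : ContractedVerts b v i, Gc.Adj bc z →
      (z:V) ≠ b ∧ ∃ j : Fin s, j ≤ i ∧ G.Adj (v j) (z:V) ∧
        ¬(j = i ∧ ∃ h : (i : ℕ) + 1 < s, (z : V) = v ⟨(i : ℕ) + 1, h⟩) := by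
    intro z h
    rcases (hAdj bc z).1 h with ⟨hne, h1 | h1⟩
    · rcases h1 with ⟨hbb, _⟩ | ⟨_, j, hj, ha, hcl⟩
      · exact absurd rfl hbb
      · refine ⟨fun hzb => hne (Subtype.ext (hbcoe.trans hzb.symm)), j, hj, ha, hcl⟩
    · rcases h1 with ⟨_, hbb, _⟩ | ⟨hzb, _⟩
      · exact absurd rfl hbb
      · exact absurd (Subtype.ext (hzb.trans hbcoe.symm) : z = bc) (fun hh => hne hh.symm)
  -- the witness index is 0 or s-1
  have hwitness : ∀ z : ContractedVerts b v i, (z:V) ≠ b → ∀ j : Fin s, j ≤ i →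
      G.Adj (v j) (z:V) →
      ¬(j = i ∧ ∃ h : (i : ℕ) + 1 < s, (z : V) = v ⟨(i : ℕ) + 1, h⟩) →
      (j:ℕ) = 0 ∨ (j:ℕ) = s - 1 := by
    intro z hzb j hj ha hcl
    by_contra hc
    push_neg at hc
    obtain ⟨hc0, hcs⟩ := hc
    have hj0 : 0 < (j:ℕ) := Nat.pos_of_ne_zero hc0
    have hjs : (j:ℕ) < s - 1 := by
      have := j.isLt; omega
    rcases hinternalNbr j hj0 hjs _ ha with hz | hz
    · refine hlive z hzb ⟨(j:ℕ)-1, by omega⟩ ?_ hz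
      refine le_trans ?_ hj
      exact Fin.le_def.2 (Nat.sub_le _ _)
    · by_cases hji : (j:ℕ) + 1 ≤ (i:ℕ)
      · exact hlive z hzb ⟨(j:ℕ)+1, by omega⟩ (by exact Fin.le_def.2 (by simpa using hji)) hz
      · have hji' : (j:ℕ) = (i:ℕ) := by
          have := (Fin.le_def).1 hj; omega
        have hjieq : j = i := Fin.ext hji'
        have hlt : (i:ℕ) + 1 < s := by omega
        refine hcl ⟨hjieq, hlt, ?_⟩
        simp only [hz]; exact congrArg v (Fin.ext (by simp [hji']))
  -- Step B: classify neighbors of bc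
  have hbcnbr : ∀ z : ContractedVerts b v i, Gc.Adj bc z →
      ((z:V) ∈ G.neighborFinset b \ {w1}) ∨
      ((i:ℕ) = s-1 ∧ (z:V) ∈ G.neighborFinset wlast \ {wpre}) := by
    intro z hz
    obtain ⟨hzb, j, hj, ha, hcl⟩ := hkeyb z hz
    rcases hwitness z hzb j hj ha hcl with hj0 | hjs
    · -- j = 0
      have hjeq : j = ⟨0, h0⟩ := Fin.ext hj0
      rw [hjeq, hv1] at ha
      left
      rw [Finset.mem_sdiff, Finset.mem_singleton, SimpleGraph.mem_neighborFinset]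
      refine ⟨ha, ?_⟩
      by_cases hi0 : (i:ℕ) = 0
      · intro hzw1
        apply hcl
        have hji : j = i := Fin.ext (by omega)
        refine ⟨hji, by omega, ?_⟩
        rw [hw1def] at hzw1
        rw [hzw1]
        exact congrArg v (Fin.ext (by simp [hi0]))
      · have : (z:V) ≠ v ⟨1, h1⟩ :=
          hlive z hzb ⟨1, h1⟩ (Fin.le_def.2 (by simp; omega))
        rw [hw1def]; exact this
    · -- j = s-1, so i = s-1
      have his : (i:ℕ) = s - 1 := by
        have h1' := Fin.le_def.1 hj
        have h2' := i.isLt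
        omega
      right
      refine ⟨his, ?_⟩
      rw [Finset.mem_sdiff, Finset.mem_singleton, SimpleGraph.mem_neighborFinset]
      have hjeq : j = ⟨s-1, hs1⟩ := Fin.ext hjs
      rw [hjeq] at ha
      rw [hwlastdef, hwpredef]
      refine ⟨ha, ?_⟩
      exact hlive z hzb ⟨s-2, by omega⟩ (Fin.le_def.2 (by simp; omega))
  -- degree bound for bc
  have hinjcoe : ∀ (t : Finset (ContractedVerts b v i)), (t.image Subtype.val).card = t.card :=
    fun t => Finset.card_image_of_injective t Subtype.val_injective
  have hw1mem : w1 ∈ G.neighborFinset b := (SimpleGraph.mem_neighborFinset _ _ _).2 hv1adj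
  have hpremem : wpre ∈ G.neighborFinset wlast := (SimpleGraph.mem_neighborFinset _ _ _).2 hpreadj.symm
  have hcardNb : (G.neighborFinset b).card = G.degree b := G.card_neighborFinset_eq_degree b
  have hcard1 : (G.neighborFinset b \ {w1}).card + 1 = G.degree b := by
    rw [Finset.card_sdiff_of_subset (Finset.singleton_subset_iff.2 hw1mem), Finset.card_singleton, hcardNb]
    omega
  have hwlast1 : 1 ≤ G.degree wlast := by
    rw [← G.card_neighborFinset_eq_degree wlast]
    exact Finset.card_pos.2 ⟨wpre, hpremem⟩
  have hbd : Gc.degree bc = ((Gc.neighborFinset bc).image Subtype.val).card := by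
    rw [hinjcoe, SimpleGraph.card_neighborFinset_eq_degree]
  have hdegbc : Gc.degree bc + 2 ≤ G.degree b + (if (i:ℕ) = s - 1 then G.degree wlast else 1) := by
    by_cases his : (i:ℕ) = s - 1
    · rw [if_pos his]
      have hsub : (Gc.neighborFinset bc).image Subtype.val ⊆
          (G.neighborFinset b \ {w1}) ∪ (G.neighborFinset wlast \ {wpre}) := by
        intro y hy
        simp only [Finset.mem_image] at hy
        obtain ⟨z, hz, rfl⟩ := hy
        rw [SimpleGraph.mem_neighborFinset] at hz
        rcases hbcnbr z hz with h | ⟨_, h⟩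
        · exact Finset.mem_union_left _ h
        · exact Finset.mem_union_right _ h
      have hle := Finset.card_le_card hsub
      have hu := Finset.card_union_le (G.neighborFinset b \ {w1}) (G.neighborFinset wlast \ {wpre})
      have hc2 : (G.neighborFinset wlast \ {wpre}).card + 1 = G.degree wlast := by
        rw [Finset.card_sdiff_of_subset (Finset.singleton_subset_iff.2 hpremem), Finset.card_singleton,
          G.card_neighborFinset_eq_degree wlast]
        omega
      omega
    · rw [if_neg his]
      have hsub : (Gc.neighborFinset bc).image Subtype.val ⊆ G.neighborFinset b \ {w1} := by
        intro y hy
        simp only [Finset.mem_image] at hy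
        obtain ⟨z, hz, rfl⟩ := hy
        rw [SimpleGraph.mem_neighborFinset] at hz
        rcases hbcnbr z hz with h | ⟨h, _⟩
        · exact h
        · exact absurd h his
      have hle := Finset.card_le_card hsub
      omega
  -- final counting
  set B : Finset V := Finset.univ.filter (fun x => 3 ≤ G.degree x) with hBdef
  set K : Finset V := (Finset.univ.filter (fun j : Fin s => j ≤ i)).image v with hKdef
  have hbB : b ∈ B := by rw [hBdef]; simp only [Finset.mem_filter]; exact ⟨Finset.mem_univ _, hb⟩
  have hbK : b ∈ K := by
    rw [hKdef]
    simp only [Finset.mem_image]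
    refine ⟨⟨0, h0⟩, ?_, hv1⟩
    simp only [Finset.mem_filter]
    exact ⟨Finset.mem_univ _, Fin.le_def.2 (by simp)⟩
  set B' : Finset (ContractedVerts b v i) := Finset.univ.filter (fun x => 3 ≤ Gc.degree x) with hB'def
  have hsplit : ∑ x ∈ B, G.degree x = ∑ x ∈ B ∩ K, G.degree x + ∑ x ∈ B \ K, G.degree x :=
    (Finset.sum_inter_add_sum_sdiff B K _).symm
  have hSK : G.degree b ≤ ∑ x ∈ B ∩ K, G.degree x :=
    Finset.single_le_sum (f := fun x => G.degree x) (fun _ _ => Nat.zero_le _) (Finset.mem_inter.2 ⟨hbB, hbK⟩)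
  have hT1 : ∑ x ∈ B', Gc.degree x ≤ Gc.degree bc + ∑ x ∈ B'.erase bc, Gc.degree x := by
    by_cases hm : bc ∈ B'
    · rw [← Finset.sum_erase_add B' _ hm]; omega
    · rw [Finset.erase_eq_of_notMem hm]; omega
  have hT2 : ∑ x ∈ B'.erase bc, Gc.degree x ≤ ∑ x ∈ B \ K, G.degree x := by
    calc ∑ x ∈ B'.erase bc, Gc.degree x ≤ ∑ x ∈ B'.erase bc, G.degree (x:V) := by
          apply Finset.sum_le_sum
          intro x hx
          exact hdegle x (hcoe_ne x (Finset.ne_of_mem_erase hx))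
      _ = ∑ y ∈ (B'.erase bc).image Subtype.val, G.degree y :=
          (Finset.sum_image (f := fun y => G.degree y) (g := Subtype.val) (fun x _ y _ h => Subtype.ext h)).symm
      _ ≤ ∑ x ∈ B \ K, G.degree x := by
          apply Finset.sum_le_sum_of_subset_of_nonneg ?_ (fun _ _ _ => Nat.zero_le _)
          intro y hy
          simp only [Finset.mem_image] at hy
          obtain ⟨x, hx, rfl⟩ := hy
          have hxb : (x:V) ≠ b := hcoe_ne x (Finset.ne_of_mem_erase hx)
          have hxB' : x ∈ B' := Finset.mem_of_mem_erase hx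
          rw [hB'def, Finset.mem_filter] at hxB'
          rw [Finset.mem_sdiff]
          constructor
          · rw [hBdef, Finset.mem_filter]
            exact ⟨Finset.mem_univ _, le_trans hxB'.2 (hdegle x hxb)⟩
          · intro hyk
            rw [hKdef] at hyk
            simp only [Finset.mem_image, Finset.mem_filter] at hyk
            obtain ⟨j, ⟨_, hj⟩, hjx⟩ := hyk
            exact hlive x hxb j hj hjx.symm
  have hGc_eq : sumBranchDeg Gc = ∑ x ∈ B', Gc.degree x := sumBranchDeg_spec Gc
  have hG_eq : sumBranchDeg G = ∑ x ∈ B, G.degree x := sumBranchDeg_spec G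
  have hend' : G.degree wlast = 1 ∨ 3 ≤ G.degree wlast := hend
  rw [hGc_eq, hG_eq]
  by_cases his : (i:ℕ) = s - 1
  · rw [if_pos his] at hdegbc
    rcases hend' with h1d | h3d
    · omega
    · have hwB : wlast ∈ B := by
        rw [hBdef]; simp only [Finset.mem_filter]; exact ⟨Finset.mem_univ _, h3d⟩
      have hwK : wlast ∈ K := by
        rw [hKdef]
        simp only [Finset.mem_image, Finset.mem_filter]
        refine ⟨i, ⟨Finset.mem_univ _, le_refl _⟩, ?_⟩
        rw [hwlastdef]
        exact congrArg v (Fin.ext (by simp [his]))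
      have hbne : b ≠ wlast := by
        intro h
        rw [hwlastdef, ← hv1] at h
        have := hinj h
        simp only [Fin.mk.injEq] at this
        omega
      have hpair : G.degree b + G.degree wlast ≤ ∑ x ∈ B ∩ K, G.degree x := by
        have hsub : ({b, wlast} : Finset V) ⊆ B ∩ K := by
          intro t ht
          simp only [Finset.mem_insert, Finset.mem_singleton] at ht
          rcases ht with rfl | rfl
          · exact Finset.mem_inter.2 ⟨hbB, hbK⟩
          · exact Finset.mem_inter.2 ⟨hwB, hwK⟩
        calc G.degree b + G.degree wlast = ∑ x ∈ ({b, wlast} : Finset V), G.degree x :=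
              (Finset.sum_pair (f := fun x => G.degree x) hbne).symm
          _ ≤ _ := Finset.sum_le_sum_of_subset hsub
      omega
  · rw [if_neg his] at hdegbc
    omega
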